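/- For every finite simple graph G on n vertices, assign to each edge e the Turán weight w_T(e) := r_e/(2(r_e−1)), where r_e is the order of a largest clique of G containing e. Then w_T(G) := (2/n²)·∑_{e∈E(G)} w_T(e) ≤ 1/2. -/

import Mathlib

open Finset
open scoped Classical

/-- The order of a largest clique of `G` containing both `u` and `v`. -/
noncomputable def cliqueOrder {V : Type} [Fintype V] (G : SimpleGraph V) (u v : V) : ℕ :=
  sSup {r : ℕ | ∃ s : Finset V, G.IsNClique r s ∧ u ∈ s ∧ v ∈ s}

/-- `w(G) = (2/n²)·∑_{e ∈ E(G)} w(r_e)`, written as a sum over ordered pairs of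
adjacent vertices (each edge is counted twice), divided by `n²`. -/
noncomputable def cliqueWeight {V : Type} [Fintype V] (G : SimpleGraph V) (w : ℕ → ℝ) : ℝ :=
  ((Fintype.card V : ℝ) ^ 2)⁻¹ *
    ∑ u : V, ∑ v : V, if G.Adj u v then w (cliqueOrder G u v) else 0

/-- The Turán weighting `w_T(r) = r / (2(r-1))`. -/
noncomputable def turanWeighting (r : ℕ) : ℝ := (r : ℝ) / (2 * ((r : ℝ) - 1))

private lemma turan_nonneg (r : ℕ) : 0 ≤ turanWeighting r := by
  unfold turanWeighting
  rcases Nat.lt_or_ge r 2 with h | h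
  · interval_cases r <;> norm_num
  · have : (2:ℝ) ≤ r := by exact_mod_cast h
    apply div_nonneg (by positivity)
    nlinarith

private lemma turan_anti {a b : ℕ} (ha : 2 ≤ a) (hab : a ≤ b) :
    turanWeighting b ≤ turanWeighting a := by
  unfold turanWeighting
  have ha' : (2:ℝ) ≤ (a:ℝ) := by exact_mod_cast ha
  have hab' : (a:ℝ) ≤ (b:ℝ) := by exact_mod_cast hab
  rw [div_le_div_iff₀ (by nlinarith) (by nlinarith)]
  nlinarith

private lemma cliqueOrder_bddAbove {V : Type} [Fintype V] (G : SimpleGraph V) (u v : V) :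
    BddAbove {r : ℕ | ∃ s : Finset V, G.IsNClique r s ∧ u ∈ s ∧ v ∈ s} := by
  refine ⟨Fintype.card V, fun r hr => ?_⟩
  obtain ⟨s, hs, -, -⟩ := hr
  calc r = s.card := hs.2.symm
    _ ≤ Fintype.card V := s.card_le_univ.trans_eq Finset.card_univ

private lemma pair_isNClique {V : Type} [Fintype V] {G : SimpleGraph V} {u v : V}
    (h : G.Adj u v) : G.IsNClique 2 ({u, v} : Finset V) := by
  constructor
  · rw [SimpleGraph.isClique_iff, Finset.coe_insert, Finset.coe_singleton]
    intro x hx y hy hxy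
    simp only [Set.mem_insert_iff, Set.mem_singleton_iff] at hx hy
    rcases hx with rfl | rfl <;> rcases hy with rfl | rfl
    · exact absurd rfl hxy
    · exact h
    · exact h.symm
    · exact absurd rfl hxy
  · rw [Finset.card_insert_of_notMem (by simp [h.ne]), Finset.card_singleton]

private lemma le_cliqueOrder {V : Type} [Fintype V] {G : SimpleGraph V} {u v : V}
    {r : ℕ} {s : Finset V} (hs : G.IsNClique r s) (hu : u ∈ s) (hv : v ∈ s) :
    r ≤ cliqueOrder G u v :=
  le_csSup (cliqueOrder_bddAbove G u v) ⟨s, hs, hu, hv⟩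

private lemma two_le_cliqueOrder {V : Type} [Fintype V] {G : SimpleGraph V} {u v : V}
    (h : G.Adj u v) : 2 ≤ cliqueOrder G u v :=
  le_cliqueOrder (pair_isNClique h) (by simp) (by simp)

private lemma cliqueOrder_comm {V : Type} [Fintype V] (G : SimpleGraph V) (u v : V) :
    cliqueOrder G u v = cliqueOrder G v u := by
  unfold cliqueOrder
  congr 1
  ext r
  constructor <;> rintro ⟨s, h1, h2, h3⟩ <;> exact ⟨s, h1, h3, h2⟩

private noncomputable def ssum {V : Type} [Fintype V] (G : SimpleGraph V) : ℝ :=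
  ∑ u : V, ∑ v : V, if G.Adj u v then turanWeighting (cliqueOrder G u v) else 0

private lemma key (N : ℕ) : ∀ (V : Type) [Fintype V] (G : SimpleGraph V),
    Fintype.card V ≤ N → ssum G ≤ (Fintype.card V : ℝ) ^ 2 / 2 := by
  induction N with
  | zero =>
    intro V _ G hV
    have : IsEmpty V := Fintype.card_eq_zero_iff.mp (Nat.le_zero.mp hV)
    have h0 : ssum G = 0 := by
      unfold ssum
      rw [Finset.univ_eq_empty, Finset.sum_empty]
    rw [h0]
    positivity
  | succ N ih =>
    intro V _ G hV
    by_cases hE : ∀ u v : V, ¬ G.Adj u v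
    · have h0 : ssum G = 0 := by
        unfold ssum
        apply Finset.sum_eq_zero
        intro u _
        apply Finset.sum_eq_zero
        intro v _
        simp [hE u v]
      rw [h0]; positivity
    push_neg at hE
    obtain ⟨u0, v0, hadj0⟩ := hE
    set f : V → V → ℝ := fun u v =>
      if G.Adj u v then turanWeighting (cliqueOrder G u v) else 0 with hf
    have fsymm : ∀ u v : V, f u v = f v u := by
      intro u v
      by_cases h : G.Adj u v
      · simp [hf, h, h.symm, cliqueOrder_comm G u v]
      · have h' : ¬ G.Adj v u := fun hh => h hh.symm
        simp [hf, h, h']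
    -- clique number
    set C : Set ℕ := {r : ℕ | ∃ s : Finset V, G.IsNClique r s} with hC
    have bddC : BddAbove C := by
      refine ⟨Fintype.card V, fun r hr => ?_⟩
      obtain ⟨s, hs⟩ := hr
      calc r = s.card := hs.2.symm
        _ ≤ Fintype.card V := s.card_le_univ.trans_eq Finset.card_univ
    set k : ℕ := sSup C with hk
    have hmax : ∀ (r : ℕ) (s : Finset V), G.IsNClique r s → r ≤ k :=
      fun r s hs => le_csSup bddC ⟨s, hs⟩
    have hk2 : 2 ≤ k := hmax 2 _ (pair_isNClique hadj0)
    have hCne : C.Nonempty := ⟨2, {u0, v0}, pair_isNClique hadj0⟩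
    obtain ⟨K, hK⟩ : ∃ s : Finset V, G.IsNClique k s :=
      Nat.sSup_mem hCne bddC
    have hKcard : K.card = k := hK.2
    have hkn : k ≤ Fintype.card V := by
      calc k = K.card := hKcard.symm
        _ ≤ Fintype.card V := K.card_le_univ.trans_eq Finset.card_univ
    have hk1R : (1:ℝ) ≤ (k:ℝ) := by exact_mod_cast (by omega : 1 ≤ k)
    -- Part A : inside K
    have hApart : ∑ u ∈ K, ∑ v ∈ K, f u v ≤ (k:ℝ) ^ 2 / 2 := by
      have hterm : ∀ u ∈ K, ∑ v ∈ K, f u v ≤ ((k:ℝ) - 1) * turanWeighting k := by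
        intro u hu
        have hzero : f u u = 0 := by simp [hf]
        rw [← Finset.sum_erase K hzero]
        calc ∑ v ∈ K.erase u, f u v ≤ ∑ _v ∈ K.erase u, turanWeighting k := by
              apply Finset.sum_le_sum
              intro v hv
              have hvK := Finset.mem_erase.mp hv
              by_cases hadj : G.Adj u v
              · simp only [hf, if_pos hadj]
                exact turan_anti hk2 (le_cliqueOrder hK hu hvK.2)
              · simp only [hf, if_neg hadj]
                exact turan_nonneg k
          _ = ((K.erase u).card : ℝ) * turanWeighting k := by
              rw [Finset.sum_const, nsmul_eq_mul]
          _ = ((k:ℝ) - 1) * turanWeighting k := by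
              rw [Finset.card_erase_of_mem hu, hKcard,
                Nat.cast_sub (by omega : 1 ≤ k), Nat.cast_one]
      calc ∑ u ∈ K, ∑ v ∈ K, f u v ≤ ∑ _u ∈ K, ((k:ℝ) - 1) * turanWeighting k :=
            Finset.sum_le_sum hterm
        _ = (k:ℝ) * (((k:ℝ) - 1) * turanWeighting k) := by
            rw [Finset.sum_const, nsmul_eq_mul, hKcard]
        _ = (k:ℝ) ^ 2 / 2 := by
            unfold turanWeighting
            have hne : (k:ℝ) - 1 ≠ 0 := by
              have : (2:ℝ) ≤ (k:ℝ) := by exact_mod_cast hk2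
              intro h; nlinarith
            field_simp
    -- cross bound
    have hcross : ∀ v ∈ Kᶜ, ∑ u ∈ K, f u v ≤ (k:ℝ) / 2 := by
      intro v hv
      have hvK : v ∉ K := Finset.mem_compl.mp hv
      set D : Finset V := K.filter (fun u => G.Adj u v) with hDdef
      have hsum : ∑ u ∈ K, f u v = ∑ u ∈ D, f u v := by
        refine (Finset.sum_subset (Finset.filter_subset _ _) ?_).symm
        intro x hx hxD
        have hnadj : ¬ G.Adj x v := fun h => hxD (Finset.mem_filter.mpr ⟨hx, h⟩)
        simp [hf, hnadj]
      rw [hsum]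
      rcases Finset.eq_empty_or_nonempty D with hDe | hDne
      · rw [hDe, Finset.sum_empty]
        positivity
      · have hd1 : 1 ≤ D.card := Finset.card_pos.mpr hDne
        have hDclique : G.IsNClique D.card D :=
          ⟨hK.1.subset (Finset.coe_subset.mpr (Finset.filter_subset _ K)), rfl⟩
        have hT : G.IsNClique (D.card + 1) (insert v D) :=
          hDclique.insert (fun b hb => ((Finset.mem_filter.mp hb).2).symm)
        have hTk : D.card + 1 ≤ k := hmax _ _ hT
        have hstep : ∀ u ∈ D, f u v ≤ turanWeighting (D.card + 1) := by
          intro u hu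
          have hadj : G.Adj u v := (Finset.mem_filter.mp hu).2
          have hord : D.card + 1 ≤ cliqueOrder G u v :=
            le_cliqueOrder hT (Finset.mem_insert_of_mem hu) (Finset.mem_insert_self _ _)
          simp only [hf, if_pos hadj]
          exact turan_anti (by omega) hord
        calc ∑ u ∈ D, f u v ≤ ∑ _u ∈ D, turanWeighting (D.card + 1) :=
              Finset.sum_le_sum hstep
          _ = (D.card : ℝ) * turanWeighting (D.card + 1) := by
              rw [Finset.sum_const, nsmul_eq_mul]
          _ = ((D.card : ℝ) + 1) / 2 := by
              unfold turanWeighting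
              have hd : (1:ℝ) ≤ (D.card : ℝ) := by exact_mod_cast hd1
              have hne : (D.card : ℝ) ≠ 0 := by linarith
              push_cast
              field_simp
              ring
              exact mul_inv_cancel₀ hne
          _ ≤ (k:ℝ) / 2 := by
              have : (D.card : ℝ) + 1 ≤ (k:ℝ) := by exact_mod_cast hTk
              linarith
    -- Part B : K × Kᶜ
    have hBpart : ∑ u ∈ K, ∑ v ∈ Kᶜ, f u v ≤ (Kᶜ.card : ℝ) * ((k:ℝ) / 2) := by
      rw [Finset.sum_comm]
      calc ∑ v ∈ Kᶜ, ∑ u ∈ K, f u v ≤ ∑ _v ∈ Kᶜ, (k:ℝ) / 2 :=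
            Finset.sum_le_sum hcross
        _ = (Kᶜ.card : ℝ) * ((k:ℝ) / 2) := by rw [Finset.sum_const, nsmul_eq_mul]
    have hB'part : ∑ u ∈ Kᶜ, ∑ v ∈ K, f u v ≤ (Kᶜ.card : ℝ) * ((k:ℝ) / 2) := by
      calc ∑ u ∈ Kᶜ, ∑ v ∈ K, f u v = ∑ u ∈ Kᶜ, ∑ v ∈ K, f v u := by
            refine Finset.sum_congr rfl fun u _ => ?_
            exact Finset.sum_congr rfl fun v _ => fsymm u v
        _ ≤ ∑ _u ∈ Kᶜ, (k:ℝ) / 2 := Finset.sum_le_sum hcross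
        _ = (Kᶜ.card : ℝ) * ((k:ℝ) / 2) := by rw [Finset.sum_const, nsmul_eq_mul]
    -- Part D : inside Kᶜ, via induction
    have hDpart : ∑ u ∈ Kᶜ, ∑ v ∈ Kᶜ, f u v ≤ (Kᶜ.card : ℝ) ^ 2 / 2 := by
      set G' : SimpleGraph ↥(Kᶜ : Finset V) := G.comap Subtype.val with hG'
      have hcardle : Fintype.card ↥(Kᶜ : Finset V) ≤ N := by
        rw [Fintype.card_coe, Finset.card_compl]
        omega
      have hIH := ih ↥(Kᶜ : Finset V) G' hcardle
      have himg : ∀ (r : ℕ) (s : Finset ↥(Kᶜ : Finset V)), G'.IsNClique r s →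
          G.IsNClique r (s.image Subtype.val) := by
        intro r s hs
        constructor
        · intro x hx y hy hxy
          simp only [Finset.coe_image, Set.mem_image, Finset.mem_coe] at hx hy
          obtain ⟨a, ha, rfl⟩ := hx
          obtain ⟨b, hb, rfl⟩ := hy
          exact hs.1 ha hb (fun h => hxy (congrArg Subtype.val h))
        · rw [Finset.card_image_of_injective _ Subtype.val_injective, hs.2]
      have hord : ∀ u v : ↥(Kᶜ : Finset V), G'.Adj u v →
          cliqueOrder G u.val v.val ≤ cliqueOrder G' u v →
          True := fun _ _ _ _ => trivial
      have hordle : ∀ u v : ↥(Kᶜ : Finset V), G'.Adj u v →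
          cliqueOrder G' u v ≤ cliqueOrder G u.val v.val := by
        intro u v huv
        have hne : {r : ℕ | ∃ s : Finset ↥(Kᶜ : Finset V),
            G'.IsNClique r s ∧ u ∈ s ∧ v ∈ s}.Nonempty :=
          ⟨2, _, pair_isNClique huv, by simp, by simp⟩
        unfold cliqueOrder
        apply csSup_le hne
        rintro r ⟨s, hs, hu, hv⟩
        exact le_cliqueOrder (himg r s hs) (Finset.mem_image_of_mem _ hu)
          (Finset.mem_image_of_mem _ hv)
      have hle : ∑ u ∈ Kᶜ, ∑ v ∈ Kᶜ, f u v ≤ ssum G' := by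
        rw [← Finset.sum_coe_sort Kᶜ (fun u => ∑ v ∈ Kᶜ, f u v)]
        unfold ssum
        apply Finset.sum_le_sum
        intro u _
        rw [← Finset.sum_coe_sort Kᶜ (fun v => f u.val v)]
        apply Finset.sum_le_sum
        intro v _
        by_cases h : G'.Adj u v
        · have hGadj : G.Adj u.val v.val := h
          rw [if_pos h]
          simp only [hf, if_pos hGadj]
          exact turan_anti (two_le_cliqueOrder h) (hordle u v h)
        · have hGnadj : ¬ G.Adj u.val v.val := h
          rw [if_neg h]
          simp [hf, hGnadj]
      calc ∑ u ∈ Kᶜ, ∑ v ∈ Kᶜ, f u v ≤ ssum G' := hle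
        _ ≤ (Fintype.card ↥(Kᶜ : Finset V) : ℝ) ^ 2 / 2 := hIH
        _ = (Kᶜ.card : ℝ) ^ 2 / 2 := by rw [Fintype.card_coe]
    -- split the whole sum
    have hsplit : ssum G = ((∑ u ∈ K, ∑ v ∈ K, f u v) + (∑ u ∈ K, ∑ v ∈ Kᶜ, f u v))
        + ((∑ u ∈ Kᶜ, ∑ v ∈ K, f u v) + (∑ u ∈ Kᶜ, ∑ v ∈ Kᶜ, f u v)) := by
      have h1 : ∀ u : V, (∑ v : V, f u v) = ∑ v ∈ K, f u v + ∑ v ∈ Kᶜ, f u v :=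
        fun u => (Finset.sum_add_sum_compl K _).symm
      unfold ssum
      rw [← Finset.sum_add_sum_compl K (fun u => ∑ v : V, f u v)]
      rw [Finset.sum_congr rfl (fun u _ => h1 u), Finset.sum_congr rfl (fun u _ => h1 u),
        Finset.sum_add_distrib, Finset.sum_add_distrib]
    have hcc : (Kᶜ.card : ℝ) = (Fintype.card V : ℝ) - (k:ℝ) := by
      rw [Finset.card_compl, hKcard, Nat.cast_sub hkn]
    have hident : (k:ℝ) ^ 2 / 2 + ((Fintype.card V : ℝ) - k) * ((k:ℝ) / 2)
        + (((Fintype.card V : ℝ) - k) * ((k:ℝ) / 2)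
          + ((Fintype.card V : ℝ) - k) ^ 2 / 2) = (Fintype.card V : ℝ) ^ 2 / 2 := by
      ring
    rw [hsplit]
    rw [hcc] at hBpart hB'part hDpart
    linarith

/-- Theorem (Turán weights): for every graph `G`, `w_T(G) ≤ 1/2`. -/
theorem cliqueWeight_turanWeighting_le_half (n : ℕ) (G : SimpleGraph (Fin n)) :
    cliqueWeight G turanWeighting ≤ 1 / 2 := by
  have h := key (Fintype.card (Fin n)) (Fin n) G le_rfl
  unfold cliqueWeight
  have hs : ssum G = ∑ u : Fin n, ∑ v : Fin n,
      if G.Adj u v then turanWeighting (cliqueOrder G u v) else 0 := rfl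
  rw [← hs]
  rcases Nat.eq_zero_or_pos n with rfl | hn
  · have : ssum G = 0 := by
      unfold ssum
      simp
    rw [this]
    norm_num
  · have hpos : (0:ℝ) < (Fintype.card (Fin n) : ℝ) ^ 2 := by
      have : (0:ℝ) < (Fintype.card (Fin n) : ℝ) := by
        simp [Fintype.card_fin]
        exact_mod_cast hn
      positivity
    rw [inv_mul_le_iff₀ hpos]
    calc ssum G ≤ (Fintype.card (Fin n) : ℝ) ^ 2 / 2 := h
      _ = (Fintype.card (Fin n) : ℝ) ^ 2 * (1 / 2) := by ring
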